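/- For every natural number S₀ and every real N > 0 with 2·S₀ ≤ N^{1/6}, the sum over nontrivial singlet channels is bounded: ∑_{k=2}^{⌊S₀/2⌋} (S₀ choose 2k) · 8^k · (k!)³ / N^{k/2} ≤ 22 · S₀⁵ / N. -/

import Mathlib

/-- `k! ≤ k^(k-1)`. -/
lemma fact_le_pow_pred : ∀ k : ℕ, k.factorial ≤ k ^ (k - 1)
  | 0 => by simp
  | 1 => by simp
  | (n + 2) => by
    calc (n + 2).factorial = (n + 2) * (n + 1).factorial := rfl
      _ ≤ (n + 2) * (n + 1) ^ ((n + 1) - 1) := Nat.mul_le_mul_left _ (fact_le_pow_pred (n + 1))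
      _ ≤ (n + 2) * (n + 2) ^ n := Nat.mul_le_mul_left _ (Nat.pow_le_pow_left (by omega) _)
      _ = (n + 2) ^ (n + 1) := (pow_succ' _ _).symm

/-- `2^k (k!)² ≤ (2k)!`. -/
lemma two_pow_mul_fact_sq_le : ∀ k : ℕ, 2 ^ k * (k.factorial) ^ 2 ≤ (2 * k).factorial
  | 0 => by simp
  | (n + 1) => by
    have ih := two_pow_mul_fact_sq_le n
    calc 2 ^ (n + 1) * ((n + 1).factorial) ^ 2
        = (2 * (n + 1) ^ 2) * (2 ^ n * (n.factorial) ^ 2) := by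
          rw [Nat.factorial_succ]; ring
      _ ≤ (2 * (n + 1) ^ 2) * (2 * n).factorial := Nat.mul_le_mul_left _ ih
      _ ≤ ((2 * n + 1 + 1) * (2 * n + 1)) * (2 * n).factorial := by
          apply Nat.mul_le_mul_right; nlinarith
      _ = (2 * (n + 1)).factorial := by
          have h1 : 2 * (n + 1) = (2 * n + 1) + 1 := by ring
          rw [h1, Nat.factorial_succ, Nat.factorial_succ]; ring

/-- The key combinatorial bound in `ℕ`. -/
lemma key_nat (S₀ k : ℕ) (hk : 2 ≤ k) (h2k : 2 * k ≤ S₀) :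
    S₀.choose (2 * k) * 8 ^ k * (k.factorial) ^ 3 * 2 ^ (k - 1)
      ≤ 22 * S₀ ^ 5 * (8 * S₀ ^ 3) ^ (k - 2) := by
  obtain ⟨j, rfl⟩ : ∃ j, k = j + 2 := ⟨k - 2, by omega⟩
  have hj1 : j + 2 - 1 = j + 1 := by omega
  have hj2 : j + 2 - 2 = j := by omega
  rw [hj1, hj2]
  set F := (2 * (j + 2)).factorial with hF
  have hFpos : 0 < F := Nat.factorial_pos _
  refine Nat.le_of_mul_le_mul_right ?_ hFpos
  have hchoose : S₀.choose (2 * (j + 2)) * F ≤ S₀ ^ (2 * (j + 2)) := by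
    calc S₀.choose (2 * (j + 2)) * F = S₀.descFactorial (2 * (j + 2)) := by
          rw [hF, Nat.descFactorial_eq_factorial_mul_choose]; ring
      _ ≤ S₀ ^ (2 * (j + 2)) := Nat.descFactorial_le_pow _ _
  have hfac : 2 ^ (j + 2) * ((j + 2).factorial) ^ 2 ≤ F := two_pow_mul_fact_sq_le (j + 2)
  have hcore : 64 * (j + 2).factorial ≤ 44 * S₀ ^ (j + 1) := by
    have h3 : (j + 2).factorial ≤ (j + 2) ^ (j + 1) := by
      have := fact_le_pow_pred (j + 2); rwa [hj1] at this
    have h4 : (2 * (j + 2)) ^ (j + 1) ≤ S₀ ^ (j + 1) := Nat.pow_le_pow_left h2k _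
    have h5 : 2 ≤ 2 ^ (j + 1) := by
      calc 2 = 2 ^ 1 := rfl
        _ ≤ 2 ^ (j + 1) := Nat.pow_le_pow_right (by norm_num) (by omega)
    calc 64 * (j + 2).factorial ≤ 64 * (j + 2) ^ (j + 1) := Nat.mul_le_mul_left _ h3
      _ ≤ (44 * 2 ^ (j + 1)) * (j + 2) ^ (j + 1) := by
          apply Nat.mul_le_mul_right; nlinarith
      _ = 44 * (2 * (j + 2)) ^ (j + 1) := by rw [mul_pow]; ring
      _ ≤ 44 * S₀ ^ (j + 1) := Nat.mul_le_mul_left _ h4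
  calc S₀.choose (2 * (j + 2)) * 8 ^ (j + 2) * ((j + 2).factorial) ^ 3 * 2 ^ (j + 1) * F
      = (S₀.choose (2 * (j + 2)) * F) * (8 ^ (j + 2) * ((j + 2).factorial) ^ 3 * 2 ^ (j + 1)) := by
        ring
    _ ≤ S₀ ^ (2 * (j + 2)) * (8 ^ (j + 2) * ((j + 2).factorial) ^ 3 * 2 ^ (j + 1)) :=
        Nat.mul_le_mul_right _ hchoose
    _ = ((j + 2).factorial) ^ 2 * 2 ^ (j + 1) * 8 ^ j
          * (S₀ ^ (2 * j + 4) * (64 * (j + 2).factorial)) := by ring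
    _ ≤ ((j + 2).factorial) ^ 2 * 2 ^ (j + 1) * 8 ^ j
          * (S₀ ^ (2 * j + 4) * (44 * S₀ ^ (j + 1))) :=
        Nat.mul_le_mul_left _ (Nat.mul_le_mul_left _ hcore)
    _ = (22 * S₀ ^ 5 * (8 ^ j * S₀ ^ (3 * j))) * (2 ^ (j + 2) * ((j + 2).factorial) ^ 2) := by
        ring
    _ ≤ (22 * S₀ ^ 5 * (8 ^ j * S₀ ^ (3 * j))) * F := Nat.mul_le_mul_left _ hfac
    _ = 22 * S₀ ^ 5 * (8 * S₀ ^ 3) ^ j * F := by rw [mul_pow, pow_mul]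

/-- Geometric tail bound. -/
lemma geo_sum_le (m : ℕ) : (∑ k ∈ Finset.Icc 2 m, ((1 : ℝ) / 2) ^ (k - 1)) ≤ 1 := by
  rcases Nat.lt_or_ge m 2 with hm | hm
  · rw [Finset.Icc_eq_empty (by omega)]; simp
  · have key : ∀ n : ℕ, 1 ≤ n →
        (∑ k ∈ Finset.Icc 2 n, ((1 : ℝ) / 2) ^ (k - 1)) ≤ 1 - (1 / 2) ^ (n - 1) := by
      intro n hn
      induction n, hn using Nat.le_induction with
      | base => rw [Finset.Icc_eq_empty (by omega)]; simp
      | succ n hn ih =>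
        rw [Finset.sum_Icc_succ_top (by omega)]
        have h1 : (n + 1) - 1 = n := by omega
        have h2 : ((1 : ℝ) / 2) ^ (n - 1) = 2 * (1 / 2) ^ n := by
          obtain ⟨i, rfl⟩ : ∃ i, n = i + 1 := ⟨n - 1, by omega⟩
          rw [Nat.add_sub_cancel, pow_succ]; ring
        rw [h1]
        have := ih
        rw [h2] at this
        linarith [this]
    calc (∑ k ∈ Finset.Icc 2 m, ((1 : ℝ) / 2) ^ (k - 1))
        ≤ 1 - (1 / 2) ^ (m - 1) := key m (by omega)
      _ ≤ 1 := sub_le_self _ (by positivity)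

/-- For `2S₀ ≤ N^{1/6}`, the sum over nontrivial singlet channels in the
tensor model is bounded: `∑_{k=2}^{⌊S₀/2⌋} (S₀ choose 2k) 8^k (k!)³ / N^{k/2} ≤ 22 S₀⁵/N`. -/
theorem stmt_15 (S₀ : ℕ) (N : ℝ) (hN : 0 < N)
    (hS : (2 * S₀ : ℝ) ≤ N ^ ((1 : ℝ) / 6)) :
    (∑ k ∈ Finset.Icc 2 (S₀ / 2),
        (S₀.choose (2 * k) : ℝ) * 8 ^ k * ((k.factorial : ℝ)) ^ 3 / N ^ ((k : ℝ) / 2)) ≤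
      22 * (S₀ : ℝ) ^ 5 / N := by
  have hroot : (8 : ℝ) * (S₀ : ℝ) ^ 3 ≤ N ^ ((1 : ℝ) / 2) := by
    have h1 : ((2 : ℝ) * S₀) ^ 3 ≤ (N ^ ((1 : ℝ) / 6)) ^ 3 :=
      pow_le_pow_left₀ (by positivity) hS 3
    have h2 : (N ^ ((1 : ℝ) / 6)) ^ (3 : ℕ) = N ^ ((1 : ℝ) / 2) := by
      rw [← Real.rpow_natCast (N ^ ((1 : ℝ) / 6)) 3, ← Real.rpow_mul hN.le]
      norm_num
    calc (8 : ℝ) * (S₀ : ℝ) ^ 3 = ((2 : ℝ) * S₀) ^ 3 := by ring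
      _ ≤ (N ^ ((1 : ℝ) / 6)) ^ 3 := h1
      _ = N ^ ((1 : ℝ) / 2) := h2
  have hterm : ∀ k ∈ Finset.Icc 2 (S₀ / 2),
      (S₀.choose (2 * k) : ℝ) * 8 ^ k * ((k.factorial : ℝ)) ^ 3 / N ^ ((k : ℝ) / 2)
        ≤ 22 * (S₀ : ℝ) ^ 5 / N * ((1 : ℝ) / 2) ^ (k - 1) := by
    intro k hk
    rw [Finset.mem_Icc] at hk
    have hk2 : 2 ≤ k := hk.1
    have h2k : 2 * k ≤ S₀ := by omega
    have hS0 : (0 : ℝ) < S₀ := by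
      have : 0 < S₀ := by omega
      exact_mod_cast this
    -- N^(k/2) ≥ N * (8 S₀³)^(k-2)
    have hNk : N * ((8 : ℝ) * (S₀ : ℝ) ^ 3) ^ (k - 2) ≤ N ^ ((k : ℝ) / 2) := by
      have hsplit : N ^ ((k : ℝ) / 2) = N * (N ^ ((1 : ℝ) / 2)) ^ (k - 2) := by
        have hcast : (k : ℝ) / 2 = 1 + (1 / 2) * ((k - 2 : ℕ) : ℝ) := by
          rw [Nat.cast_sub hk2]; push_cast; ring
        rw [hcast, Real.rpow_add hN, Real.rpow_one, Real.rpow_mul hN.le,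
          Real.rpow_natCast]
      rw [hsplit]
      apply mul_le_mul_of_nonneg_left _ hN.le
      exact pow_le_pow_left₀ (by positivity) hroot _
    have hkey : (S₀.choose (2 * k) : ℝ) * 8 ^ k * ((k.factorial : ℝ)) ^ 3 * 2 ^ (k - 1)
        ≤ 22 * (S₀ : ℝ) ^ 5 * ((8 : ℝ) * (S₀ : ℝ) ^ 3) ^ (k - 2) := by
      have := key_nat S₀ k hk2 h2k
      exact_mod_cast this
    have hNkpos : (0 : ℝ) < N ^ ((k : ℝ) / 2) := Real.rpow_pos_of_pos hN _
    rw [div_mul_eq_mul_div, div_le_div_iff₀ hNkpos hN]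
    calc (S₀.choose (2 * k) : ℝ) * 8 ^ k * ((k.factorial : ℝ)) ^ 3 * N
        = ((S₀.choose (2 * k) : ℝ) * 8 ^ k * ((k.factorial : ℝ)) ^ 3 * 2 ^ (k - 1))
            * N * ((1 : ℝ) / 2) ^ (k - 1) := by
          rw [div_pow, one_pow, mul_assoc, mul_assoc]
          field_simp
      _ ≤ (22 * (S₀ : ℝ) ^ 5 * ((8 : ℝ) * (S₀ : ℝ) ^ 3) ^ (k - 2))
            * N * ((1 : ℝ) / 2) ^ (k - 1) := by
          apply mul_le_mul_of_nonneg_right _ (by positivity)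
          exact mul_le_mul_of_nonneg_right hkey hN.le
      _ = (22 * (S₀ : ℝ) ^ 5 * ((1 : ℝ) / 2) ^ (k - 1))
            * (N * ((8 : ℝ) * (S₀ : ℝ) ^ 3) ^ (k - 2)) := by ring
      _ ≤ (22 * (S₀ : ℝ) ^ 5 * ((1 : ℝ) / 2) ^ (k - 1)) * N ^ ((k : ℝ) / 2) := by
          apply mul_le_mul_of_nonneg_left hNk (by positivity)
  calc (∑ k ∈ Finset.Icc 2 (S₀ / 2),
        (S₀.choose (2 * k) : ℝ) * 8 ^ k * ((k.factorial : ℝ)) ^ 3 / N ^ ((k : ℝ) / 2))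
      ≤ ∑ k ∈ Finset.Icc 2 (S₀ / 2), 22 * (S₀ : ℝ) ^ 5 / N * ((1 : ℝ) / 2) ^ (k - 1) :=
        Finset.sum_le_sum hterm
    _ = 22 * (S₀ : ℝ) ^ 5 / N * ∑ k ∈ Finset.Icc 2 (S₀ / 2), ((1 : ℝ) / 2) ^ (k - 1) := by
        rw [Finset.mul_sum]
    _ ≤ 22 * (S₀ : ℝ) ^ 5 / N * 1 := by
        apply mul_le_mul_of_nonneg_left (geo_sum_le _) (by positivity)
    _ = 22 * (S₀ : ℝ) ^ 5 / N := mul_one _
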